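/- Let m and n be coprime positive integers, let d′ be a positive integer, and let g ∈ ℂ[[X,Y]] be a formal power series in two variables such that every monomial X^a·Y^b occurring in g with nonzero coefficient satisfies m·a + n·b > m·n·d′. Set f = (Y^m − X^n)^{d′} + g. Let C denote the set of pairs (x,y) of power series in ℂ[[t]] with zero constant term for which there exists a positive integer p with ord x = m·p, ord y = n·p, and leading coefficients satisfying y₀^m = x₀^n. Then for every positive integer N, the set of pairs (x,y) with zero constant term not belonging to C such that f(x,y) has the form t^N plus terms of order greater than N is equal to the set of pairs (x,y) with zero constant term not belonging to C such that (y^m − x^n)^{d′} has the form t^N plus terms of order greater than N. -/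

import Mathlib

open PowerSeries

/-- Evaluation `F(x,y)` of a two-variable formal power series `F ∈ ℂ[[X,Y]]` at a pair of
one-variable power series `x, y ∈ ℂ[[t]]`.  (The formula below computes the correct
substitution whenever `x` and `y` have zero constant term.) -/
noncomputable def mvEval (F : MvPowerSeries (Fin 2) ℂ) (x y : PowerSeries ℂ) :
    PowerSeries ℂ :=
  PowerSeries.mk fun k =>
    ∑ ab ∈ Finset.range (k + 1) ×ˢ Finset.range (k + 1),
      MvPowerSeries.coeff (Finsupp.single 0 ab.1 + Finsupp.single 1 ab.2) F *
        PowerSeries.coeff k (x ^ ab.1 * y ^ ab.2)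

lemma aux_coeff_mul_zero {φ ψ : PowerSeries ℂ} {a b j : ℕ}
    (hφ : ∀ i < a, PowerSeries.coeff i φ = 0)
    (hψ : ∀ i < b, PowerSeries.coeff i ψ = 0) (hj : j < a + b) :
    PowerSeries.coeff j (φ * ψ) = 0 := by
  rw [PowerSeries.coeff_mul]
  apply Finset.sum_eq_zero
  rintro ⟨p, q⟩ hpq
  rw [Finset.HasAntidiagonal.mem_antidiagonal] at hpq
  rcases lt_or_ge p a with h | h
  · simp [hφ p h]
  · have : q < b := by omega
    simp [hψ q this]

lemma aux_coeff_mul_add {φ ψ : PowerSeries ℂ} {a b : ℕ}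
    (hφ : ∀ i < a, PowerSeries.coeff i φ = 0)
    (hψ : ∀ i < b, PowerSeries.coeff i ψ = 0) :
    PowerSeries.coeff (a + b) (φ * ψ) = PowerSeries.coeff a φ * PowerSeries.coeff b ψ := by
  rw [PowerSeries.coeff_mul]
  apply Finset.sum_eq_single (a, b)
  · rintro ⟨p, q⟩ hpq hne
    rw [Finset.HasAntidiagonal.mem_antidiagonal] at hpq
    rcases lt_or_ge p a with h | h
    · simp [hφ p h]
    · rcases Nat.lt_or_ge q b with h' | h'
      · simp [hψ q h']
      · exfalso; apply hne; have : p = a ∧ q = b := by omega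
        simp [this.1, this.2]
  · intro h
    simp [Finset.mem_antidiagonal] at h

lemma aux_coeff_pow {φ : PowerSeries ℂ} {a : ℕ}
    (hφ : ∀ i < a, PowerSeries.coeff i φ = 0) (e : ℕ) :
    (∀ j < e * a, PowerSeries.coeff j (φ ^ e) = 0) ∧
      PowerSeries.coeff (e * a) (φ ^ e) = (PowerSeries.coeff a φ) ^ e := by
  induction e with
  | zero => simp
  | succ e ih =>
    constructor
    · intro j hj
      rw [pow_succ]
      exact aux_coeff_mul_zero ih.1 hφ (by rw [add_one_mul] at hj; omega)
    · rw [pow_succ, show (e + 1) * a = e * a + a by ring, aux_coeff_mul_add ih.1 hφ, ih.2,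
        pow_succ]

lemma aux_coeff_monomial_zero {x y : PowerSeries ℂ} {u v a b i : ℕ}
    (hx : ∀ j < u, PowerSeries.coeff j x = 0) (hy : ∀ j < v, PowerSeries.coeff j y = 0)
    (hi : i < a * u + b * v) : PowerSeries.coeff i (x ^ a * y ^ b) = 0 :=
  aux_coeff_mul_zero (aux_coeff_pow hx a).1 (aux_coeff_pow hy b).1 hi

lemma mvEval_add (F G : MvPowerSeries (Fin 2) ℂ) (x y : PowerSeries ℂ) :
    mvEval (F + G) x y = mvEval F x y + mvEval G x y := by
  ext k
  simp [mvEval, add_mul, Finset.sum_add_distrib]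

lemma mvEval_coeff_eq_zero {g : MvPowerSeries (Fin 2) ℂ} {x y : PowerSeries ℂ} {i : ℕ}
    (h : ∀ a b : ℕ,
      MvPowerSeries.coeff (Finsupp.single 0 a + Finsupp.single 1 b) g ≠ 0 →
        PowerSeries.coeff i (x ^ a * y ^ b) = 0) :
    PowerSeries.coeff i (mvEval g x y) = 0 := by
  rw [mvEval, PowerSeries.coeff_mk]
  apply Finset.sum_eq_zero
  rintro ⟨a, b⟩ _
  by_cases hc : MvPowerSeries.coeff (Finsupp.single 0 a + Finsupp.single 1 b) g = 0
  · simp [hc]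
  · simp [h a b hc]

lemma finsupp_fin2_eq (d : Fin 2 →₀ ℕ) :
    Finsupp.single 0 (d 0) + Finsupp.single 1 (d 1) = d := by
  ext i
  fin_cases i <;> simp [Finsupp.single_apply]

lemma mvEval_coe (x y : PowerSeries ℂ) (hx : PowerSeries.constantCoeff x = 0)
    (hy : PowerSeries.constantCoeff y = 0) (P : MvPolynomial (Fin 2) ℂ) :
    mvEval (↑P) x y = MvPolynomial.eval₂ (PowerSeries.C) ![x, y] P := by
  classical
  have hx1 : ∀ j < 1, PowerSeries.coeff j x = 0 := by
    intro j hj; interval_cases j; simpa using hx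
  have hy1 : ∀ j < 1, PowerSeries.coeff j y = 0 := by
    intro j hj; interval_cases j; simpa using hy
  ext k
  rw [mvEval, PowerSeries.coeff_mk]
  set F : (Fin 2 →₀ ℕ) → ℂ :=
    fun d => MvPolynomial.coeff d P * PowerSeries.coeff k (x ^ d 0 * y ^ d 1) with hF
  set φ : ℕ × ℕ → (Fin 2 →₀ ℕ) :=
    fun ab => Finsupp.single 0 ab.1 + Finsupp.single 1 ab.2 with hφ
  have hφ0 : ∀ ab : ℕ × ℕ, (φ ab) 0 = ab.1 := by
    intro ab; simp [hφ, Finsupp.single_apply]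
  have hφ1 : ∀ ab : ℕ × ℕ, (φ ab) 1 = ab.2 := by
    intro ab; simp [hφ, Finsupp.single_apply]
  set T : Finset (Fin 2 →₀ ℕ) := (Finset.range (k + 1) ×ˢ Finset.range (k + 1)).image φ with hT
  have hinj : ∀ p ∈ Finset.range (k + 1) ×ˢ Finset.range (k + 1),
      ∀ q ∈ Finset.range (k + 1) ×ˢ Finset.range (k + 1), φ p = φ q → p = q := by
    intro p _ q _ h
    have h0 : (φ p) 0 = (φ q) 0 := by rw [h]
    have h1 : (φ p) 1 = (φ q) 1 := by rw [h]
    rw [hφ0, hφ0] at h0; rw [hφ1, hφ1] at h1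
    exact Prod.ext h0 h1
  have lhs_eq : (∑ ab ∈ Finset.range (k + 1) ×ˢ Finset.range (k + 1),
      MvPowerSeries.coeff (Finsupp.single 0 ab.1 + Finsupp.single 1 ab.2) (↑P : MvPowerSeries (Fin 2) ℂ) *
        PowerSeries.coeff k (x ^ ab.1 * y ^ ab.2)) = ∑ d ∈ T, F d := by
    rw [hT, Finset.sum_image hinj]
    apply Finset.sum_congr rfl
    intro ab _
    rw [hF]
    simp only [hφ0, hφ1]
    rw [MvPolynomial.coeff_coe]
  have rhs_eq : PowerSeries.coeff k (MvPolynomial.eval₂ (PowerSeries.C) ![x, y] P) =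
      ∑ d ∈ P.support, F d := by
    rw [MvPolynomial.eval₂_eq', map_sum]
    apply Finset.sum_congr rfl
    intro d _
    rw [Fin.prod_univ_two]
    simp [hF, PowerSeries.coeff_C_mul]
  rw [lhs_eq, rhs_eq]
  have h1 : ∑ d ∈ T, F d = ∑ d ∈ T ∪ P.support, F d := by
    apply Finset.sum_subset Finset.subset_union_left
    intro d _ hdT
    have : k < d 0 ∨ k < d 1 := by
      by_contra hcon
      push_neg at hcon
      apply hdT
      rw [hT]
      apply Finset.mem_image.mpr
      refine ⟨(d 0, d 1), ?_, ?_⟩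
      · simp [Finset.mem_product]; omega
      · exact finsupp_fin2_eq d
    simp only [hF]
    have : k < d 0 * 1 + d 1 * 1 := by omega
    rw [aux_coeff_monomial_zero hx1 hy1 this, mul_zero]
  have h2 : ∑ d ∈ P.support, F d = ∑ d ∈ T ∪ P.support, F d := by
    apply Finset.sum_subset Finset.subset_union_right
    intro d _ hd
    simp only [hF]
    rw [MvPolynomial.notMem_support_iff.mp hd, zero_mul]
  rw [h1, h2]

lemma ord_spec {z : PowerSeries ℂ} (hz : z ≠ 0) (h0 : PowerSeries.constantCoeff z = 0) :
    ∃ u : ℕ, 0 < u ∧ z.order = (u : ℕ∞) ∧ PowerSeries.coeff u z ≠ 0 ∧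
      ∀ j < u, PowerSeries.coeff j z = 0 := by
  have htop : z.order ≠ ⊤ := by simpa [PowerSeries.order_eq_top] using hz
  obtain ⟨u, hu⟩ := WithTop.ne_top_iff_exists.mp htop
  obtain ⟨h1, h2⟩ := PowerSeries.order_eq_nat.mp hu.symm
  refine ⟨u, ?_, hu.symm, h1, fun j hj => h2 j hj⟩
  rcases Nat.eq_zero_or_pos u with rfl | h
  · exact absurd (by simpa [PowerSeries.coeff_zero_eq_constantCoeff] using h0) h1
  · exact h

lemma profile (m n d' : ℕ) (hm : 0 < m) (hn : 0 < n) (hmn : Nat.Coprime m n) (hd' : 0 < d')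
    (x y : PowerSeries ℂ) (hx : PowerSeries.constantCoeff x = 0)
    (hy : PowerSeries.constantCoeff y = 0)
    (hC : ¬(∃ p : ℕ, 0 < p ∧ x.order = (m * p : ℕ) ∧ y.order = (n * p : ℕ) ∧
        (PowerSeries.coeff (n * p) y) ^ m = (PowerSeries.coeff (m * p) x) ^ n))
    (hxy : ¬(x = 0 ∧ y = 0)) :
    ∃ s : ℕ, (∀ j < s, PowerSeries.coeff j (y ^ m - x ^ n) = 0) ∧
      PowerSeries.coeff s (y ^ m - x ^ n) ≠ 0 ∧
      ∀ a b : ℕ, m * n * d' < m * a + n * b →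
        ∀ i ≤ d' * s, PowerSeries.coeff i (x ^ a * y ^ b) = 0 := by
  have hzero1 : ∀ j < 1, PowerSeries.coeff j (0 : PowerSeries ℂ) = 0 := by simp
  by_cases hx0 : x = 0
  · have hy0 : y ≠ 0 := fun h => hxy ⟨hx0, h⟩
    obtain ⟨v, hv1, hvord, hvne, hvlow⟩ := ord_spec hy0 hy
    subst hx0
    refine ⟨m * v, ?_, ?_, ?_⟩
    · intro j hj
      rw [zero_pow hn.ne', sub_zero]
      exact (aux_coeff_pow hvlow m).1 j hj
    · rw [zero_pow hn.ne', sub_zero, (aux_coeff_pow hvlow m).2]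
      exact pow_ne_zero m hvne
    · intro a b hab i hi
      rcases Nat.eq_zero_or_pos a with rfl | ha
      · have hb : m * d' + 1 ≤ b := by
          have h1 : n * (m * d') < n * b := by
            calc n * (m * d') = m * n * d' := by ring
              _ < m * 0 + n * b := hab
              _ = n * b := by ring
          have := Nat.lt_of_mul_lt_mul_left h1
          omega
        apply aux_coeff_monomial_zero hzero1 hvlow
        have h2 : d' * (m * v) < (m * d' + 1) * v := by
          have he : d' * (m * v) = m * d' * v := by ring
          rw [he, add_mul, one_mul]
          omega
        have h3 : (m * d' + 1) * v ≤ b * v := Nat.mul_le_mul_right v hb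
        omega
      · simp [zero_pow ha.ne']
  · by_cases hy0 : y = 0
    · obtain ⟨u, hu1, huord, hune, hulow⟩ := ord_spec hx0 hx
      subst hy0
      refine ⟨n * u, ?_, ?_, ?_⟩
      · intro j hj
        rw [zero_pow hm.ne', zero_sub, map_neg, (aux_coeff_pow hulow n).1 j hj, neg_zero]
      · rw [zero_pow hm.ne', zero_sub, map_neg, (aux_coeff_pow hulow n).2, neg_ne_zero]
        exact pow_ne_zero n hune
      · intro a b hab i hi
        rcases Nat.eq_zero_or_pos b with rfl | hb
        · have ha : n * d' + 1 ≤ a := by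
            have h1 : m * (n * d') < m * a := by
              calc m * (n * d') = m * n * d' := by ring
                _ < m * a + n * 0 := hab
                _ = m * a := by ring
            have := Nat.lt_of_mul_lt_mul_left h1
            omega
          apply aux_coeff_monomial_zero hulow hzero1
          have h2 : d' * (n * u) < (n * d' + 1) * u := by
            have he : d' * (n * u) = n * d' * u := by ring
            rw [he, add_mul, one_mul]
            omega
          have h3 : (n * d' + 1) * u ≤ a * u := Nat.mul_le_mul_right u ha
          omega
        · simp [zero_pow hb.ne']
    · obtain ⟨u, hu1, huord, hune, hulow⟩ := ord_spec hx0 hx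
      obtain ⟨v, hv1, hvord, hvne, hvlow⟩ := ord_spec hy0 hy
      have hxn_low : ∀ j < n * u, PowerSeries.coeff j (x ^ n) = 0 := (aux_coeff_pow hulow n).1
      have hym_low : ∀ j < m * v, PowerSeries.coeff j (y ^ m) = 0 := (aux_coeff_pow hvlow m).1
      have hxn_top : PowerSeries.coeff (n * u) (x ^ n) = (PowerSeries.coeff u x) ^ n :=
        (aux_coeff_pow hulow n).2
      have hym_top : PowerSeries.coeff (m * v) (y ^ m) = (PowerSeries.coeff v y) ^ m :=
        (aux_coeff_pow hvlow m).2
      refine ⟨min (n * u) (m * v), ?_, ?_, ?_⟩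
      · intro j hj
        rw [map_sub, hxn_low j (lt_of_lt_of_le hj (min_le_left _ _)),
          hym_low j (lt_of_lt_of_le hj (min_le_right _ _)), sub_zero]
      · rcases lt_trichotomy (n * u) (m * v) with h | h | h
        · rw [min_eq_left h.le, map_sub, hym_low _ h, hxn_top, zero_sub, neg_ne_zero]
          exact pow_ne_zero n hune
        · rw [min_eq_left h.le, map_sub]
          rw [show m * v = n * u from h.symm] at hym_top
          rw [hym_top, hxn_top]
          intro hzero
          apply hC
          have hdvd : m ∣ u := by
            apply Nat.Coprime.dvd_of_dvd_mul_left hmn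
            exact ⟨v, by linarith [h]⟩
          obtain ⟨p, hp⟩ := hdvd
          have hp1 : 0 < p := by
            rcases Nat.eq_zero_or_pos p with rfl | h'
            · omega
            · exact h'
          have hvp : v = n * p := by
            apply Nat.eq_of_mul_eq_mul_left hm
            calc m * v = n * u := h.symm
              _ = n * (m * p) := by rw [hp]
              _ = m * (n * p) := by ring
          refine ⟨p, hp1, ?_, ?_, ?_⟩
          · rw [huord, hp]
          · rw [hvord, hvp]
          · rw [← hvp, ← hp]
            have := sub_eq_zero.mp hzero
            exact this
        · rw [min_eq_right h.le, map_sub, hxn_low _ h, hym_top, sub_zero]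
          exact pow_ne_zero m hvne
      · intro a b hab i hi
        apply aux_coeff_monomial_zero hulow hvlow
        set s := min (n * u) (m * v) with hs
        have hs1 : 0 < s := lt_min (Nat.mul_pos hn hu1) (Nat.mul_pos hm hv1)
        have key : m * n * i < m * n * (a * u + b * v) := by
          calc m * n * i ≤ m * n * (d' * s) := Nat.mul_le_mul_left _ hi
            _ = (m * n * d') * s := by ring
            _ < (m * a + n * b) * s := (Nat.mul_lt_mul_right hs1).mpr hab
            _ = m * a * s + n * b * s := by ring
            _ ≤ m * a * (n * u) + n * b * (m * v) := by
                exact Nat.add_le_add (Nat.mul_le_mul_left _ (min_le_left _ _))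
                  (Nat.mul_le_mul_left _ (min_le_right _ _))
            _ = m * n * (a * u + b * v) := by ring
        exact Nat.lt_of_mul_lt_mul_left key

lemma cond_iff {h G : PowerSeries ℂ} {M N : ℕ}
    (hlow : ∀ j < M, PowerSeries.coeff j h = 0) (hM : PowerSeries.coeff M h ≠ 0)
    (hG : ∀ i ≤ M, PowerSeries.coeff i G = 0) :
    ((∀ i < N, PowerSeries.coeff i (h + G) = 0) ∧ PowerSeries.coeff N (h + G) = 1) ↔
      ((∀ i < N, PowerSeries.coeff i h = 0) ∧ PowerSeries.coeff N h = 1) := by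
  constructor
  · rintro ⟨A1, A2⟩
    have hNM : N = M := by
      by_contra hne
      rcases Nat.lt_or_ge N M with h1 | h2
      · rw [map_add, hlow N h1, hG N h1.le, add_zero] at A2
        exact one_ne_zero A2.symm
      · have h2' : M < N := lt_of_le_of_ne h2 fun he => hne he.symm
        have := A1 M h2'
        rw [map_add, hG M le_rfl, add_zero] at this
        exact hM this
    subst hNM
    refine ⟨fun i hi => ?_, ?_⟩
    · have := A1 i hi
      rwa [map_add, hG i hi.le, add_zero] at this
    · rwa [map_add, hG N le_rfl, add_zero] at A2
  · rintro ⟨B1, B2⟩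
    have hNM : N = M := by
      by_contra hne
      rcases Nat.lt_or_ge N M with h1 | h2
      · rw [hlow N h1] at B2
        exact one_ne_zero B2.symm
      · exact hM (B1 M (lt_of_le_of_ne h2 fun he => hne he.symm))
    subst hNM
    exact ⟨fun i hi => by rw [map_add, B1 i hi, hG i hi.le, add_zero],
      by rw [map_add, B2, hG N le_rfl, add_zero]⟩

lemma mvEval_f_eq (m n d' : ℕ) (g f : MvPowerSeries (Fin 2) ℂ)
    (hf : f = (MvPowerSeries.X 1 ^ m - MvPowerSeries.X 0 ^ n) ^ d' + g)
    (x y : PowerSeries ℂ) (hx : PowerSeries.constantCoeff x = 0)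
    (hy : PowerSeries.constantCoeff y = 0) :
    mvEval f x y = (y ^ m - x ^ n) ^ d' + mvEval g x y := by
  subst hf
  rw [mvEval_add]
  congr 1
  have hQ : ((((MvPolynomial.X 1 ^ m - MvPolynomial.X 0 ^ n) ^ d' :
      MvPolynomial (Fin 2) ℂ)) : MvPowerSeries (Fin 2) ℂ) =
      (MvPowerSeries.X 1 ^ m - MvPowerSeries.X 0 ^ n) ^ d' := by
    rw [← MvPolynomial.coeToMvPowerSeries.ringHom_apply, map_pow, map_sub, map_pow, map_pow,
      MvPolynomial.coeToMvPowerSeries.ringHom_apply, MvPolynomial.coeToMvPowerSeries.ringHom_apply,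
      MvPolynomial.coe_X, MvPolynomial.coe_X]
  rw [← hQ, mvEval_coe x y hx hy, MvPolynomial.eval₂_pow, MvPolynomial.eval₂_sub,
    MvPolynomial.eval₂_pow, MvPolynomial.eval₂_pow, MvPolynomial.eval₂_X, MvPolynomial.eval₂_X]
  simp

/-- With `f = (Y^m − X^n)^{d′} + g` as in equation (1) of the paper, and `C` the set of
pairs `(x,y)` of power series with zero constant term admitting a positive integer `p`
with `ord x = m·p`, `ord y = n·p` and leading coefficients satisfying `y₀^m = x₀^n`:
for every positive integer `N`, the pairs `(x,y) ∉ C` (with zero constant terms) for which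
`f(x,y) = t^N + (higher order)` are exactly the pairs `(x,y) ∉ C` for which
`(y^m − x^n)^{d′} = t^N + (higher order)`. -/
theorem stmt7 (m n d' : ℕ) (hm : 0 < m) (hn : 0 < n) (hmn : Nat.Coprime m n)
    (hd' : 0 < d')
    (g : MvPowerSeries (Fin 2) ℂ)
    (hg : ∀ d : Fin 2 →₀ ℕ, MvPowerSeries.coeff d g ≠ 0 →
        m * n * d' < m * d 0 + n * d 1)
    (f : MvPowerSeries (Fin 2) ℂ)
    (hf : f = (MvPowerSeries.X 1 ^ m - MvPowerSeries.X 0 ^ n) ^ d' + g)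
    (N : ℕ) (hN : 0 < N) :
    {xy : PowerSeries ℂ × PowerSeries ℂ |
        PowerSeries.constantCoeff xy.1 = 0 ∧ PowerSeries.constantCoeff xy.2 = 0 ∧
        ¬(∃ p : ℕ, 0 < p ∧ xy.1.order = (m * p : ℕ) ∧ xy.2.order = (n * p : ℕ) ∧
            (PowerSeries.coeff (n * p) xy.2) ^ m =
              (PowerSeries.coeff (m * p) xy.1) ^ n) ∧
        (∀ i < N, PowerSeries.coeff i (mvEval f xy.1 xy.2) = 0) ∧
        PowerSeries.coeff N (mvEval f xy.1 xy.2) = 1} =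
    {xy : PowerSeries ℂ × PowerSeries ℂ |
        PowerSeries.constantCoeff xy.1 = 0 ∧ PowerSeries.constantCoeff xy.2 = 0 ∧
        ¬(∃ p : ℕ, 0 < p ∧ xy.1.order = (m * p : ℕ) ∧ xy.2.order = (n * p : ℕ) ∧
            (PowerSeries.coeff (n * p) xy.2) ^ m =
              (PowerSeries.coeff (m * p) xy.1) ^ n) ∧
        (∀ i < N, PowerSeries.coeff i ((xy.2 ^ m - xy.1 ^ n) ^ d') = 0) ∧
        PowerSeries.coeff N ((xy.2 ^ m - xy.1 ^ n) ^ d') = 1} := by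
  ext ⟨x, y⟩
  simp only [Set.mem_setOf_eq]
  refine and_congr_right fun hx => and_congr_right fun hy => and_congr_right fun hC => ?_
  rw [mvEval_f_eq m n d' g f hf x y hx hy]
  by_cases hxy : x = 0 ∧ y = 0
  · obtain ⟨rfl, rfl⟩ := hxy
    have hz : (((0 : PowerSeries ℂ) ^ m - (0 : PowerSeries ℂ) ^ n) ^ d') = 0 := by
      rw [zero_pow hm.ne', zero_pow hn.ne', sub_zero, zero_pow hd'.ne']
    rw [hz]
    have hG : ∀ i : ℕ, PowerSeries.coeff i (mvEval g 0 0) = 0 := by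
      intro i
      apply mvEval_coeff_eq_zero
      intro a b hab
      rcases Nat.eq_zero_or_pos a with rfl | ha
      · rcases Nat.eq_zero_or_pos b with rfl | hb
        · exfalso
          have := hg _ hab
          simp [Finsupp.single_apply] at this
        · rw [zero_pow hb.ne']
          simp
      · rw [zero_pow ha.ne']
        simp
    apply iff_of_false
    · rintro ⟨_, h2⟩
      rw [map_add, map_zero, zero_add, hG N] at h2
      exact one_ne_zero h2.symm
    · rintro ⟨_, h2⟩
      rw [map_zero] at h2
      exact one_ne_zero h2.symm
  · obtain ⟨s, hlow, hne, hbound⟩ := profile m n d' hm hn hmn hd' x y hx hy hC hxy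
    have hhlow : ∀ j < d' * s, PowerSeries.coeff j ((y ^ m - x ^ n) ^ d') = 0 :=
      (aux_coeff_pow hlow d').1
    have hhne : PowerSeries.coeff (d' * s) ((y ^ m - x ^ n) ^ d') ≠ 0 := by
      rw [(aux_coeff_pow hlow d').2]
      exact pow_ne_zero _ hne
    have hG : ∀ i ≤ d' * s, PowerSeries.coeff i (mvEval g x y) = 0 := by
      intro i hi
      apply mvEval_coeff_eq_zero
      intro a b hab
      have h' := hg _ hab
      simp only [Finsupp.add_apply, Finsupp.single_apply] at h'
      norm_num at h'
      exact hbound a b h' i hi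
    exact cond_iff hhlow hhne hG
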